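/- (Replacement theorem) Let (V, #, ∗) be a strongly left distributive hypervector space over a hyperfield (F, ⊕, ·). Suppose {α₁, α₂, ..., αₙ} generates V, i.e., V = HL(α₁, ..., αₙ), and {β₁, β₂, ..., βₘ} ⊆ V is linearly independent. Then m ≤ n, and V is generated by a set of the form {β₁, ..., βₘ, α_{i₁}, α_{i₂}, ..., α_{i_{n−m}}} for suitable indices i₁, ..., i_{n−m} ∈ {1, ..., n}. -/

import Mathlib

universe u v

/-- A hyperfield: `(F, ⊕, ·)` where `(F, ⊕)` is a commutative hypergroup with zero
element `zero` (each `a` having a unique additive inverse `neg a`, and satisfying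
reversibility), and `·` is an associative commutative multiplication distributing
over `⊕` from both sides, with `a·0 = 0·a = 0`, an identity `one` and multiplicative
inverses for nonzero elements. -/
structure Hyperfield (F : Type u) where
  add : F → F → Set F
  add_nonempty : ∀ a b, (add a b).Nonempty
  add_comm : ∀ a b, add a b = add b a
  add_assoc : ∀ a b c, (⋃ t ∈ add b c, add a t) = ⋃ t ∈ add a b, add t c
  zero : F
  neg : F → F
  neg_spec : ∀ a, zero ∈ add a (neg a) ∧ zero ∈ add (neg a) a
  neg_unique : ∀ a b, zero ∈ add a b → zero ∈ add b a → b = neg a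
  reversible : ∀ a b c, a ∈ add b c → b ∈ add a (neg c)
  mul : F → F → F
  mul_assoc : ∀ a b c, mul (mul a b) c = mul a (mul b c)
  left_distrib : ∀ a b c, (mul a) '' (add b c) = add (mul a b) (mul a c)
  right_distrib : ∀ a b c, (fun t => mul t a) '' (add b c) = add (mul b a) (mul c a)
  mul_zero : ∀ a, mul a zero = zero
  zero_mul : ∀ a, mul zero a = zero
  one : F
  mul_one : ∀ a, mul a one = a
  one_ne_zero : one ≠ zero
  mul_comm : ∀ a b, mul a b = mul b a
  exists_inv : ∀ a, a ≠ zero → ∃ b, mul a b = one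

/-- A hypervector space `(V, #, ∗)` over a hyperfield `K` on `F`:
`(V, #)` is a commutative hypergroup with zero vector `vzero`, and
`∗ : F × V → P*(V)` satisfies (i) `a ∗ (α # β) ⊆ a∗α # a∗β`,
(ii) `(a ⊕ b) ∗ α ⊆ a∗α # b∗α`, (iii) `(a·b) ∗ α = a ∗ (b ∗ α)`,
(iv) `1 ∗ α = {α}` and `0 ∗ α = {θ}`. -/
structure HypervectorSpace (F : Type u) (V : Type v) (K : Hyperfield F) where
  vadd : V → V → Set V
  vadd_nonempty : ∀ x y, (vadd x y).Nonempty
  vadd_comm : ∀ x y, vadd x y = vadd y x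
  vadd_assoc : ∀ x y z, (⋃ t ∈ vadd y z, vadd x t) = ⋃ t ∈ vadd x y, vadd t z
  vzero : V
  vneg : V → V
  vneg_spec : ∀ x, vzero ∈ vadd x (vneg x) ∧ vzero ∈ vadd (vneg x) x
  vneg_unique : ∀ x y, vzero ∈ vadd x y → vzero ∈ vadd y x → y = vneg x
  vreversible : ∀ x y z, x ∈ vadd y z → y ∈ vadd x (vneg z)
  smul : F → V → Set V
  smul_nonempty : ∀ a x, (smul a x).Nonempty
  smul_vadd : ∀ a x y, (⋃ t ∈ vadd x y, smul a t) ⊆ ⋃ u ∈ smul a x, ⋃ w ∈ smul a y, vadd u w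
  add_smul : ∀ a b x, (⋃ t ∈ K.add a b, smul t x) ⊆ ⋃ u ∈ smul a x, ⋃ w ∈ smul b x, vadd u w
  mul_smul : ∀ a b x, smul (K.mul a b) x = ⋃ t ∈ smul b x, smul a t
  one_smul : ∀ x, smul K.one x = {x}
  zero_smul : ∀ x, smul K.zero x = {vzero}

namespace HypervectorSpace

variable {F : Type u} {V : Type v} {K : Hyperfield F}

/-- The hyperoperation `#` extended to subsets: `A # B = ⋃_{a ∈ A, b ∈ B} a # b`. -/
def setVadd (H : HypervectorSpace F V K) (A B : Set V) : Set V :=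
  ⋃ a ∈ A, ⋃ b ∈ B, H.vadd a b

/-- A subset `W` of a hypervector space is a hypersubspace if it is closed under `#`
and `∗`, contains the zero vector, and contains additive inverses. -/
def IsHypersubspace (H : HypervectorSpace F V K) (W : Set V) : Prop :=
  (∀ α ∈ W, ∀ β ∈ W, H.vadd α β ⊆ W) ∧
  (∀ a : F, ∀ α ∈ W, H.smul a α ⊆ W) ∧
  H.vzero ∈ W ∧
  (∀ α ∈ W, H.vneg α ∈ W)

/-- Iterated hyperoperation `A₁ # A₂ # ... # Aₙ` on a list of subsets
(by convention the empty hypersum is `{θ}`). -/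
def hsum (H : HypervectorSpace F V K) : List (Set V) → Set V
  | [] => {H.vzero}
  | [A] => A
  | A :: B :: rest => H.setVadd A (HypervectorSpace.hsum H (B :: rest))

/-- The linear combination set `a₁∗α₁ # a₂∗α₂ # ... # aₙ∗αₙ`. -/
def lincomb (H : HypervectorSpace F V K) {n : ℕ} (a : Fin n → F) (α : Fin n → V) : Set V :=
  H.hsum (List.ofFn fun i => H.smul (a i) (α i))

/-- The hyperlinear span `HL(α₁, ..., αₙ) = ⋃ { a₁∗α₁ # ... # aₙ∗αₙ : a₁, ..., aₙ ∈ F }`. -/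
def HL (H : HypervectorSpace F V K) {n : ℕ} (α : Fin n → V) : Set V :=
  ⋃ a : Fin n → F, H.lincomb a α

/-- The family `α₁, ..., αₙ` is linearly dependent if `θ ∈ a₁∗α₁ # ... # aₙ∗αₙ`
for some scalars `a₁, ..., aₙ`, not all zero. -/
def LinDep (H : HypervectorSpace F V K) {n : ℕ} (α : Fin n → V) : Prop :=
  ∃ a : Fin n → F, (∃ i, a i ≠ K.zero) ∧ H.vzero ∈ H.lincomb a α

/-- Strongly left distributive: equality `(a ⊕ b) ∗ α = a∗α # b∗α`. -/
def StronglyLeftDistrib (H : HypervectorSpace F V K) : Prop :=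
  ∀ (a b : F) (x : V),
    (⋃ t ∈ K.add a b, H.smul t x) = ⋃ u ∈ H.smul a x, ⋃ w ∈ H.smul b x, H.vadd u w

/-- The set of all finite linear combinations of elements of `S`. -/
def HLSet (H : HypervectorSpace F V K) (S : Set V) : Set V :=
  ⋃ n : ℕ, ⋃ β : Fin n → V, ⋃ (_ : ∀ i, β i ∈ S), H.HL β

/-- A set `S` is linearly independent if every finite family of distinct elements
of `S` is linearly independent. -/
def LinIndepSet (H : HypervectorSpace F V K) (S : Set V) : Prop :=
  ∀ (n : ℕ) (β : Fin n → V), Function.Injective β → (∀ i, β i ∈ S) → ¬ H.LinDep β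

/-- `S` is a basis of the hypersubspace `U`: `S ⊆ U`, `S` is linearly independent,
and every element of `U` is a finite linear combination of elements of `S`. -/
def IsBasisOf (H : HypervectorSpace F V K) (S U : Set V) : Prop :=
  S ⊆ U ∧ H.LinIndepSet S ∧ U ⊆ H.HLSet S

end HypervectorSpace

section HyperfieldFacts

variable {F : Type u}

/-! ### Hyperfield facts -/

theorem Hyperfield.add_zero_zero (K : Hyperfield F) : K.add K.zero K.zero = {K.zero} := by
  have h := K.left_distrib K.zero K.zero K.zero
  rw [K.zero_mul] at h
  have himg : (K.mul K.zero) '' (K.add K.zero K.zero) = {K.zero} := by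
    apply Set.eq_singleton_iff_nonempty_unique_mem.2
    refine ⟨(K.add_nonempty K.zero K.zero).image _, ?_⟩
    rintro x ⟨a, _, rfl⟩
    exact K.zero_mul a
  rw [himg] at h
  exact h.symm

theorem Hyperfield.neg_zero' (K : Hyperfield F) : K.neg K.zero = K.zero := by
  have h : K.zero ∈ K.add K.zero K.zero := by rw [K.add_zero_zero]; rfl
  exact (K.neg_unique K.zero K.zero h h).symm

theorem Hyperfield.neg_neg' (K : Hyperfield F) (a : F) : K.neg (K.neg a) = a :=
  (K.neg_unique (K.neg a) a (K.neg_spec a).2 (K.neg_spec a).1).symm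

theorem Hyperfield.self_mem_add_zero (K : Hyperfield F) (a : F) : a ∈ K.add a K.zero := by
  have h := K.reversible K.zero a (K.neg a) (K.neg_spec a).1
  rw [K.neg_neg', K.add_comm] at h
  exact h

theorem Hyperfield.add_zero' (K : Hyperfield F) (a : F) : K.add a K.zero = {a} := by
  ext y
  constructor
  · intro hy
    rw [K.add_comm] at hy
    have h1 : K.zero ∈ K.add y (K.neg a) := K.reversible y K.zero a hy
    have h2 : K.zero ∈ K.add (K.neg a) y := by rw [K.add_comm]; exact h1
    have := K.neg_unique (K.neg a) y h2 h1
    rw [K.neg_neg'] at this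
    exact this
  · rintro rfl
    exact K.self_mem_add_zero _

theorem Hyperfield.neg_one_ne_zero (K : Hyperfield F) : K.neg K.one ≠ K.zero := by
  intro h
  have h1 : K.zero ∈ K.add K.one K.zero := h ▸ (K.neg_spec K.one).1
  rw [K.add_zero'] at h1
  exact K.one_ne_zero h1.symm

end HyperfieldFacts

namespace HypervectorSpace

variable {F : Type u} {V : Type v} {K : Hyperfield F}

/-! ### Basic vector facts -/

variable (H : HypervectorSpace F V K)

theorem mem_setVadd {A B : Set V} {z : V} :
    z ∈ H.setVadd A B ↔ ∃ a ∈ A, ∃ b ∈ B, z ∈ H.vadd a b := by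
  simp [setVadd]

theorem setVadd_singleton (x y : V) : H.setVadd {x} {y} = H.vadd x y := by
  ext z; simp [H.mem_setVadd]

theorem setVadd_comm' (A B : Set V) : H.setVadd A B = H.setVadd B A := by
  ext z
  simp only [H.mem_setVadd]
  constructor
  · rintro ⟨a, ha, b, hb, hz⟩; exact ⟨b, hb, a, ha, by rw [H.vadd_comm]; exact hz⟩
  · rintro ⟨b, hb, a, ha, hz⟩; exact ⟨a, ha, b, hb, by rw [H.vadd_comm]; exact hz⟩

theorem setVadd_assoc' (A B C : Set V) :
    H.setVadd (H.setVadd A B) C = H.setVadd A (H.setVadd B C) := by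
  ext z
  simp only [H.mem_setVadd]
  constructor
  · rintro ⟨t, ⟨a, ha, b, hb, ht⟩, c, hc, hz⟩
    have hz' : z ∈ ⋃ t ∈ H.vadd a b, H.vadd t c := Set.mem_biUnion ht hz
    rw [← H.vadd_assoc] at hz'
    obtain ⟨s, hs, hz''⟩ := Set.mem_iUnion₂.1 hz'
    exact ⟨a, ha, s, ⟨b, hb, c, hc, hs⟩, hz''⟩
  · rintro ⟨a, ha, t, ⟨b, hb, c, hc, ht⟩, hz⟩
    have hz' : z ∈ ⋃ t ∈ H.vadd b c, H.vadd a t := Set.mem_biUnion ht hz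
    rw [H.vadd_assoc] at hz'
    obtain ⟨s, hs, hz''⟩ := Set.mem_iUnion₂.1 hz'
    exact ⟨s, ⟨a, ha, b, hb, hs⟩, c, hc, hz''⟩

theorem setVadd_left_comm (A B C : Set V) :
    H.setVadd A (H.setVadd B C) = H.setVadd B (H.setVadd A C) := by
  rw [← H.setVadd_assoc', H.setVadd_comm' A B, H.setVadd_assoc']

theorem setVadd_setVadd_comm (A B C D : Set V) :
    H.setVadd (H.setVadd A B) (H.setVadd C D) = H.setVadd (H.setVadd A C) (H.setVadd B D) := by
  rw [H.setVadd_assoc', H.setVadd_left_comm B C D, ← H.setVadd_assoc']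

theorem setVadd_mono {A A' B B' : Set V} (hA : A ⊆ A') (hB : B ⊆ B') :
    H.setVadd A B ⊆ H.setVadd A' B' := by
  intro z hz
  obtain ⟨a, ha, b, hb, hz⟩ := H.mem_setVadd.1 hz
  exact H.mem_setVadd.2 ⟨a, hA ha, b, hB hb, hz⟩

theorem smul_vzero (a : F) : H.smul a H.vzero = {H.vzero} := by
  have h := H.mul_smul a K.zero H.vzero
  rw [K.mul_zero, H.zero_smul] at h
  simpa using h.symm

theorem vzero_mem_vadd_vzero_vzero : H.vzero ∈ H.vadd H.vzero H.vzero := by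
  have h := H.add_smul K.zero K.zero H.vzero
  rw [H.zero_smul] at h
  have h0 : H.vzero ∈ ⋃ t ∈ K.add K.zero K.zero, H.smul t H.vzero := by
    refine Set.mem_biUnion (by rw [K.add_zero_zero]; rfl) ?_
    rw [H.zero_smul]; rfl
  have := h h0
  simpa [H.mem_setVadd, setVadd] using this

theorem vneg_vzero : H.vneg H.vzero = H.vzero :=
  (H.vneg_unique _ _ H.vzero_mem_vadd_vzero_vzero H.vzero_mem_vadd_vzero_vzero).symm

theorem vneg_vneg (x : V) : H.vneg (H.vneg x) = x :=
  (H.vneg_unique (H.vneg x) x (H.vneg_spec x).2 (H.vneg_spec x).1).symm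

theorem self_mem_vadd_vzero (x : V) : x ∈ H.vadd x H.vzero := by
  have h := H.vreversible H.vzero x (H.vneg x) (H.vneg_spec x).1
  rw [H.vneg_vneg, H.vadd_comm] at h
  exact h

theorem vadd_vzero (x : V) : H.vadd x H.vzero = {x} := by
  ext y
  constructor
  · intro hy
    rw [H.vadd_comm] at hy
    have h1 : H.vzero ∈ H.vadd y (H.vneg x) := H.vreversible y H.vzero x hy
    have h2 : H.vzero ∈ H.vadd (H.vneg x) y := by rw [H.vadd_comm]; exact h1
    have := H.vneg_unique (H.vneg x) y h2 h1
    rw [H.vneg_vneg] at this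
    exact this
  · rintro rfl
    exact H.self_mem_vadd_vzero _

theorem vzero_vadd (x : V) : H.vadd H.vzero x = {x} := by
  rw [H.vadd_comm, H.vadd_vzero]

theorem setVadd_vzero (A : Set V) : H.setVadd A {H.vzero} = A := by
  ext z
  simp only [H.mem_setVadd, Set.mem_singleton_iff]
  constructor
  · rintro ⟨a, ha, b, rfl, hz⟩
    rw [H.vadd_vzero] at hz
    exact hz ▸ ha
  · intro hz
    exact ⟨z, hz, H.vzero, rfl, by rw [H.vadd_vzero]; rfl⟩

theorem vzero_setVadd (A : Set V) : H.setVadd {H.vzero} A = A := by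
  rw [H.setVadd_comm', H.setVadd_vzero]

end HypervectorSpace

namespace HypervectorSpace

variable {F : Type u} {V : Type v} {K : Hyperfield F} (H : HypervectorSpace F V K)

/-! ### hsum lemmas -/

theorem hsum_cons (A : Set V) (l : List (Set V)) :
    H.hsum (A :: l) = H.setVadd A (H.hsum l) := by
  cases l with
  | nil => show A = H.setVadd A {H.vzero}; rw [H.setVadd_vzero]
  | cons B t => rfl

theorem hsum_append (l₁ l₂ : List (Set V)) :
    H.hsum (l₁ ++ l₂) = H.setVadd (H.hsum l₁) (H.hsum l₂) := by
  induction l₁ with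
  | nil => show H.hsum l₂ = _ ; rw [show H.hsum [] = {H.vzero} from rfl, H.vzero_setVadd]
  | cons A t ih => rw [List.cons_append, H.hsum_cons, ih, H.hsum_cons, H.setVadd_assoc']

theorem hsum_all_vzero {l : List (Set V)} (h : ∀ A ∈ l, A = {H.vzero}) :
    H.hsum l = {H.vzero} := by
  induction l with
  | nil => rfl
  | cons A t ih =>
    rw [H.hsum_cons, h A (List.mem_cons_self), ih fun B hB => h B (List.mem_cons_of_mem A hB),
      H.vzero_setVadd]

/-- Closure properties of a hypersubspace (zero, addition, scalar multiplication). -/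
def Closed (W : Set V) : Prop :=
  H.vzero ∈ W ∧ (∀ x ∈ W, ∀ y ∈ W, H.vadd x y ⊆ W) ∧ ∀ (a : F), ∀ x ∈ W, H.smul a x ⊆ W

theorem hsum_subset {W : Set V} (hW : H.Closed W) :
    ∀ {l : List (Set V)}, (∀ A ∈ l, A ⊆ W) → H.hsum l ⊆ W := by
  intro l
  induction l with
  | nil => intro _; simpa [hsum] using hW.1
  | cons A t ih =>
    intro h
    rw [H.hsum_cons]
    intro z hz
    obtain ⟨a, ha, s, hs, hz⟩ := H.mem_setVadd.1 hz
    exact hW.2.1 a (h A (List.mem_cons_self) ha) s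
      (ih (fun B hB => h B (List.mem_cons_of_mem A hB)) hs) hz

/-! ### lincomb lemmas -/

theorem lincomb_cons {k : ℕ} (a : Fin (k + 1) → F) (δ : Fin (k + 1) → V) :
    H.lincomb a δ =
      H.setVadd (H.smul (a 0) (δ 0)) (H.lincomb (a ∘ Fin.succ) (δ ∘ Fin.succ)) := by
  show H.hsum _ = _
  rw [List.ofFn_succ, H.hsum_cons]
  rfl

theorem lincomb_zero_eq {k : ℕ} (δ : Fin k → V) :
    H.lincomb (fun _ => K.zero) δ = {H.vzero} := by
  apply H.hsum_all_vzero
  intro A hA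
  obtain ⟨i, rfl⟩ := List.mem_ofFn.1 hA
  exact H.zero_smul (δ i)

theorem mem_HL_iff {k : ℕ} {δ : Fin k → V} {x : V} :
    x ∈ H.HL δ ↔ ∃ a : Fin k → F, x ∈ H.lincomb a δ := by
  simp [HL]

theorem vzero_mem_HL {k : ℕ} (δ : Fin k → V) : H.vzero ∈ H.HL δ :=
  H.mem_HL_iff.2 ⟨fun _ => K.zero, by rw [H.lincomb_zero_eq]; rfl⟩

/-- Pulling out one summand of an `hsum` of a tuple of sets. -/
theorem hsum_ofFn_update {k : ℕ} (f : Fin k → Set V) (i : Fin k) :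
    H.hsum (List.ofFn f) =
      H.setVadd (f i) (H.hsum (List.ofFn (Function.update f i {H.vzero}))) := by
  induction k with
  | zero => exact i.elim0
  | succ k ih =>
    induction i using Fin.cases with
    | zero =>
      rw [List.ofFn_succ (f := f), H.hsum_cons,
        List.ofFn_succ (f := Function.update f 0 {H.vzero}), H.hsum_cons]
      have h0 : Function.update f 0 ({H.vzero} : Set V) 0 = {H.vzero} :=
        Function.update_self _ _ _
      have htail : (fun i : Fin k => Function.update f 0 ({H.vzero} : Set V) i.succ) =
          fun i : Fin k => f i.succ :=
        funext fun i => Function.update_of_ne (Fin.succ_ne_zero i) _ _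
      rw [h0, htail, H.vzero_setVadd]
    | succ i' =>
      rw [List.ofFn_succ (f := f), H.hsum_cons, ih (fun j => f j.succ) i',
        List.ofFn_succ (f := Function.update f i'.succ {H.vzero}), H.hsum_cons]
      have h0 : Function.update f i'.succ ({H.vzero} : Set V) 0 = f 0 :=
        Function.update_of_ne (Fin.succ_ne_zero i').symm _ _
      have htail : (fun j : Fin k => Function.update f i'.succ ({H.vzero} : Set V) j.succ) =
          Function.update (fun j : Fin k => f j.succ) i' {H.vzero} := by
        funext j
        by_cases hj : j = i'
        · subst hj
          rw [Function.update_self, Function.update_self]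
        · rw [Function.update_of_ne hj, Function.update_of_ne (fun h => hj (Fin.succ_injective _ h))]
      rw [h0, htail, H.setVadd_left_comm]

theorem mem_HL {k : ℕ} (δ : Fin k → V) (i : Fin k) : δ i ∈ H.HL δ := by
  apply H.mem_HL_iff.2
  refine ⟨fun j => if j = i then K.one else K.zero, ?_⟩
  show δ i ∈ H.hsum (List.ofFn fun j => H.smul (if j = i then K.one else K.zero) (δ j))
  rw [H.hsum_ofFn_update (fun j => H.smul (if j = i then K.one else K.zero) (δ j)) i]
  have h1 : H.smul (if i = i then K.one else K.zero) (δ i) = {δ i} := by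
    rw [if_pos rfl, H.one_smul]
  have h2 : H.hsum (List.ofFn (Function.update
      (fun j => H.smul (if j = i then K.one else K.zero) (δ j)) i {H.vzero})) = {H.vzero} := by
    apply H.hsum_all_vzero
    intro A hA
    obtain ⟨j, rfl⟩ := List.mem_ofFn.1 hA
    by_cases hj : j = i
    · subst hj; rw [Function.update_self]
    · rw [Function.update_of_ne hj, if_neg hj, H.zero_smul]
  rw [h1, h2, H.setVadd_vzero]
  rfl

end HypervectorSpace

namespace HypervectorSpace

variable {F : Type u} {V : Type v} {K : Hyperfield F} (H : HypervectorSpace F V K)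

theorem vneg_mem_smul_neg_one (hsld : H.StronglyLeftDistrib) (x : V) :
    H.vneg x ∈ H.smul (K.neg K.one) x := by
  have h : (⋃ t ∈ K.add K.one (K.neg K.one), H.smul t x) =
      H.setVadd (H.smul K.one x) (H.smul (K.neg K.one) x) := hsld K.one (K.neg K.one) x
  have hθ : H.vzero ∈ ⋃ t ∈ K.add K.one (K.neg K.one), H.smul t x := by
    refine Set.mem_biUnion (K.neg_spec K.one).1 ?_
    rw [H.zero_smul]; rfl
  rw [h] at hθ
  obtain ⟨u, hu, w, hw, hz⟩ := H.mem_setVadd.1 hθ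
  rw [H.one_smul] at hu
  have hu' : u = x := hu
  subst hu'
  have h1 : H.vzero ∈ H.vadd w u := by rw [H.vadd_comm]; exact hz
  have h2 := H.vneg_unique u w hz h1
  exact h2 ▸ hw

theorem mem_lincomb_cons {k : ℕ} {δ : Fin (k + 1) → V} {e : F} {d : Fin k → F} {p q z : V}
    (hp : p ∈ H.smul e (δ 0)) (hq : q ∈ H.lincomb d (δ ∘ Fin.succ)) (hz : z ∈ H.vadd p q) :
    z ∈ H.lincomb (Fin.cons e d) δ := by
  rw [H.lincomb_cons]
  have h0 : (Fin.cons e d : Fin (k + 1) → F) 0 = e := rfl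
  have hs : (Fin.cons e d : Fin (k + 1) → F) ∘ Fin.succ = d :=
    funext fun i => by show (Fin.cons e d : Fin (k + 1) → F) i.succ = d i; simp
  rw [h0, hs]
  exact H.mem_setVadd.2 ⟨p, hp, q, hq, hz⟩

theorem lincomb_eq_vzero_of_zero {δ : Fin 0 → V} {b : Fin 0 → F} :
    H.lincomb b δ = {H.vzero} := by
  show H.hsum (List.ofFn _) = _
  rw [List.ofFn_zero]
  rfl

theorem smul_lincomb_subset : ∀ {k : ℕ} (δ : Fin k → V) (b : Fin k → F) (a : F) (x : V),
    x ∈ H.lincomb b δ → H.smul a x ⊆ H.HL δ := by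
  intro k
  induction k with
  | zero =>
    intro δ b a x hx
    rw [H.lincomb_eq_vzero_of_zero] at hx
    have : x = H.vzero := hx
    subst this
    rw [H.smul_vzero]
    exact Set.singleton_subset_iff.2 (H.vzero_mem_HL δ)
  | succ k ih =>
    intro δ b a x hx
    rw [H.lincomb_cons] at hx
    obtain ⟨u, hu, s, hs, hxus⟩ := H.mem_setVadd.1 hx
    intro z hz
    have hz1 : z ∈ ⋃ t ∈ H.vadd u s, H.smul a t := Set.mem_biUnion hxus hz
    have hz2 := H.smul_vadd a u s hz1
    obtain ⟨p, hp, q, hq, hz3⟩ := H.mem_setVadd.1 hz2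
    have hp' : p ∈ H.smul (K.mul a (b 0)) (δ 0) := by
      rw [H.mul_smul]; exact Set.mem_biUnion hu hp
    have hq' : q ∈ H.HL (δ ∘ Fin.succ) := ih (δ ∘ Fin.succ) (b ∘ Fin.succ) a s hs hq
    obtain ⟨d, hqd⟩ := H.mem_HL_iff.1 hq'
    exact H.mem_HL_iff.2 ⟨Fin.cons (K.mul a (b 0)) d, H.mem_lincomb_cons hp' hqd hz3⟩

theorem vadd_lincomb_subset (hsld : H.StronglyLeftDistrib) :
    ∀ {k : ℕ} (δ : Fin k → V) (b c : Fin k → F) (x y : V),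
    x ∈ H.lincomb b δ → y ∈ H.lincomb c δ → H.vadd x y ⊆ H.HL δ := by
  intro k
  induction k with
  | zero =>
    intro δ b c x y hx hy
    rw [H.lincomb_eq_vzero_of_zero] at hx hy
    have hx' : x = H.vzero := hx
    have hy' : y = H.vzero := hy
    subst hx'; subst hy'
    rw [H.vadd_vzero]
    exact Set.singleton_subset_iff.2 (H.vzero_mem_HL δ)
  | succ k ih =>
    intro δ b c x y hx hy
    rw [H.lincomb_cons] at hx hy
    obtain ⟨u, hu, s, hs, hxus⟩ := H.mem_setVadd.1 hx
    obtain ⟨w, hw, t, ht, hywt⟩ := H.mem_setVadd.1 hy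
    intro z hz
    have hz1 : z ∈ H.setVadd (H.vadd u s) (H.vadd w t) :=
      H.mem_setVadd.2 ⟨x, hxus, y, hywt, hz⟩
    rw [← H.setVadd_singleton u s, ← H.setVadd_singleton w t, H.setVadd_setVadd_comm,
      H.setVadd_singleton, H.setVadd_singleton] at hz1
    obtain ⟨p, hpuw, q, hqst, hzpq⟩ := H.mem_setVadd.1 hz1
    have hp1 : p ∈ H.setVadd (H.smul (b 0) (δ 0)) (H.smul (c 0) (δ 0)) :=
      H.mem_setVadd.2 ⟨u, hu, w, hw, hpuw⟩
    have heq : H.setVadd (H.smul (b 0) (δ 0)) (H.smul (c 0) (δ 0)) =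
        ⋃ e ∈ K.add (b 0) (c 0), H.smul e (δ 0) := (hsld (b 0) (c 0) (δ 0)).symm
    rw [heq] at hp1
    obtain ⟨e, he, hp3⟩ := Set.mem_iUnion₂.1 hp1
    have hq' : q ∈ H.HL (δ ∘ Fin.succ) :=
      ih (δ ∘ Fin.succ) (b ∘ Fin.succ) (c ∘ Fin.succ) s t hs ht hqst
    obtain ⟨d, hqd⟩ := H.mem_HL_iff.1 hq'
    exact H.mem_HL_iff.2 ⟨Fin.cons e d, H.mem_lincomb_cons hp3 hqd hzpq⟩

theorem HL_closed (hsld : H.StronglyLeftDistrib) {k : ℕ} (δ : Fin k → V) :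
    H.Closed (H.HL δ) := by
  refine ⟨H.vzero_mem_HL δ, ?_, ?_⟩
  · intro x hx y hy
    obtain ⟨b, hb⟩ := H.mem_HL_iff.1 hx
    obtain ⟨c, hc⟩ := H.mem_HL_iff.1 hy
    exact H.vadd_lincomb_subset hsld δ b c x y hb hc
  · intro a x hx
    obtain ⟨b, hb⟩ := H.mem_HL_iff.1 hx
    exact H.smul_lincomb_subset δ b a x hb

theorem HL_subset {k : ℕ} {δ : Fin k → V} {W : Set V} (hW : H.Closed W)
    (hδ : ∀ i, δ i ∈ W) : H.HL δ ⊆ W := by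
  intro x hx
  obtain ⟨a, ha⟩ := H.mem_HL_iff.1 hx
  refine H.hsum_subset hW ?_ ha
  intro A hA
  obtain ⟨i, rfl⟩ := List.mem_ofFn.1 hA
  exact hW.2.2 (a i) (δ i) (hδ i)

theorem exchange (hsld : H.StronglyLeftDistrib) {W : Set V} (hW : H.Closed W) {k : ℕ}
    (δ : Fin k → V) (c : Fin k → F) (j : Fin k) (hcj : c j ≠ K.zero) {x : V}
    (hx : x ∈ H.lincomb c δ) (hxW : x ∈ W) (hδ : ∀ i, i ≠ j → δ i ∈ W) : δ j ∈ W := by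
  have hx' : x ∈ H.setVadd (H.smul (c j) (δ j))
      (H.hsum (List.ofFn (Function.update (fun i => H.smul (c i) (δ i)) j {H.vzero}))) := by
    rw [← H.hsum_ofFn_update (fun i => H.smul (c i) (δ i)) j]
    exact hx
  obtain ⟨u, hu, r, hr, hxur⟩ := H.mem_setVadd.1 hx'
  have hrW : r ∈ W := by
    refine H.hsum_subset hW ?_ hr
    intro A hA
    obtain ⟨i, rfl⟩ := List.mem_ofFn.1 hA
    by_cases hij : i = j
    · subst hij
      rw [Function.update_self]
      exact Set.singleton_subset_iff.2 hW.1
    · rw [Function.update_of_ne hij]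
      exact hW.2.2 (c i) (δ i) (hδ i hij)
  have hnegr : H.vneg r ∈ W := hW.2.2 (K.neg K.one) r hrW (H.vneg_mem_smul_neg_one hsld r)
  have hu' : u ∈ H.vadd x (H.vneg r) := H.vreversible x u r hxur
  have huW : u ∈ W := hW.2.1 x hxW (H.vneg r) hnegr hu'
  obtain ⟨b, hb⟩ := K.exists_inv (c j) hcj
  have h1 : H.smul (K.mul b (c j)) (δ j) = {δ j} := by rw [K.mul_comm, hb, H.one_smul]
  have h2 : H.smul b u ⊆ {δ j} := by
    rw [← h1, H.mul_smul]
    exact Set.subset_biUnion_of_mem hu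
  obtain ⟨w, hw⟩ := H.smul_nonempty b u
  have hwd : w = δ j := h2 hw
  exact hwd ▸ (hW.2.2 b u huW hw)

theorem lincomb_snoc {m : ℕ} (a : Fin m → F) (e : F) (β : Fin (m + 1) → V) :
    H.lincomb (Fin.snoc a e) β =
      H.setVadd (H.lincomb a (β ∘ Fin.castSucc)) (H.smul e (β (Fin.last m))) := by
  show H.hsum (List.ofFn fun i : Fin (m + 1) => H.smul ((Fin.snoc a e : Fin (m + 1) → F) i) (β i)) = _
  simp only [List.ofFn_succ', List.concat_eq_append, H.hsum_append, Fin.snoc_castSucc,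
    Fin.snoc_last]
  rfl

theorem lincomb_split {m r : ℕ} (c : Fin (m + r) → F) (δ : Fin (m + r) → V) :
    H.lincomb c δ = H.setVadd
      (H.lincomb (fun i => c (Fin.castAdd r i)) (fun i => δ (Fin.castAdd r i)))
      (H.lincomb (fun i => c (Fin.natAdd m i)) (fun i => δ (Fin.natAdd m i))) := by
  show H.hsum _ = _
  rw [List.ofFn_add, H.hsum_append]
  rfl

theorem lindep_of_lindep_castSucc {m : ℕ} {β : Fin (m + 1) → V}
    (h : H.LinDep (β ∘ Fin.castSucc)) : H.LinDep β := by
  obtain ⟨a, ⟨i, hi⟩, hθ⟩ := h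
  refine ⟨Fin.snoc a K.zero, ⟨Fin.castSucc i, by rwa [Fin.snoc_castSucc]⟩, ?_⟩
  rw [H.lincomb_snoc, H.zero_smul, H.setVadd_vzero]
  exact hθ

theorem lindep_of_last_mem_span (hsld : H.StronglyLeftDistrib) {m : ℕ} {β : Fin (m + 1) → V}
    (hx : β (Fin.last m) ∈ H.HL (β ∘ Fin.castSucc)) : H.LinDep β := by
  obtain ⟨c', hc'⟩ := H.mem_HL_iff.1 hx
  refine ⟨Fin.snoc c' (K.neg K.one),
    ⟨Fin.last m, by rw [Fin.snoc_last]; exact K.neg_one_ne_zero⟩, ?_⟩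
  rw [H.lincomb_snoc]
  exact H.mem_setVadd.2 ⟨β (Fin.last m), hc', H.vneg (β (Fin.last m)),
    H.vneg_mem_smul_neg_one hsld _, (H.vneg_spec _).1⟩

end HypervectorSpace

/-- Replacement theorem: if `{α₁, ..., αₙ}` generates a strongly left distributive
hypervector space `V` and `{β₁, ..., βₘ}` is linearly independent, then `m ≤ n` and
`V` is generated by a set of the form `{β₁, ..., βₘ, α_{i₁}, ..., α_{i_{n−m}}}`. -/
theorem HypervectorSpace.replacement {F : Type u} {V : Type v}
    {K : Hyperfield F} (H : HypervectorSpace F V K)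
    (hsld : H.StronglyLeftDistrib) {n m : ℕ}
    (α : Fin n → V) (hgen : H.HL α = Set.univ)
    (β : Fin m → V) (hind : ¬ H.LinDep β) :
    m ≤ n ∧ ∃ g : Fin (n - m) → Fin n,
      H.HL (Fin.append β (α ∘ g)) = Set.univ := by
  induction m with
  | zero =>
    refine ⟨Nat.zero_le n, fun i => i, ?_⟩
    apply Set.eq_univ_of_univ_subset
    rw [← hgen]
    apply H.HL_subset (H.HL_closed hsld _)
    intro i
    have h := H.mem_HL (Fin.append β (α ∘ fun i => i)) (Fin.natAdd 0 i)
    rwa [Fin.append_right] at h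
  | succ m ih =>
    have hind' : ¬ H.LinDep (β ∘ Fin.castSucc) := fun h => hind (H.lindep_of_lindep_castSucc h)
    obtain ⟨hmn, g, hg⟩ := ih (β ∘ Fin.castSucc) hind'
    have hxδ : β (Fin.last m) ∈ H.HL (Fin.append (β ∘ Fin.castSucc) (α ∘ g)) := by
      rw [hg]; trivial
    obtain ⟨c, hc⟩ := H.mem_HL_iff.1 hxδ
    by_cases hzero : ∀ j' : Fin (n - m), c (Fin.natAdd m j') = K.zero
    · exfalso
      apply hind
      apply H.lindep_of_last_mem_span hsld
      apply H.mem_HL_iff.2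
      refine ⟨fun i => c (Fin.castAdd (n - m) i), ?_⟩
      rw [H.lincomb_split c _] at hc
      have h2 : H.lincomb (fun i => c (Fin.natAdd m i))
          (fun i => Fin.append (β ∘ Fin.castSucc) (α ∘ g) (Fin.natAdd m i)) = {H.vzero} := by
        apply H.hsum_all_vzero
        intro A hA
        obtain ⟨i, rfl⟩ := List.mem_ofFn.1 hA
        simp only [hzero, H.zero_smul]
      rw [h2, H.setVadd_vzero] at hc
      have h3 : (fun i : Fin m => Fin.append (β ∘ Fin.castSucc) (α ∘ g) (Fin.castAdd (n - m) i))
          = (β ∘ Fin.castSucc) := by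
        funext i
        exact Fin.append_left _ _ i
      rw [h3] at hc
      exact hc
    · push_neg at hzero
      obtain ⟨j', hj'⟩ := hzero
      have hpos : 0 < n - m := j'.pos
      obtain ⟨k, hk⟩ : ∃ k, n - m = k + 1 := ⟨n - m - 1, by omega⟩
      have hk2 : n - (m + 1) = k := by omega
      refine ⟨by omega, fun i => g (Fin.cast hk.symm ((Fin.cast hk j').succAbove (Fin.cast hk2 i))), ?_⟩
      set g' : Fin (n - (m + 1)) → Fin n :=
        fun i => g (Fin.cast hk.symm ((Fin.cast hk j').succAbove (Fin.cast hk2 i))) with hg'def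
      have hclosed := H.HL_closed hsld (Fin.append β (α ∘ g'))
      have hxW : β (Fin.last m) ∈ H.HL (Fin.append β (α ∘ g')) := by
        have h := H.mem_HL (Fin.append β (α ∘ g')) (Fin.castAdd (n - (m + 1)) (Fin.last m))
        rwa [Fin.append_left] at h
      have hothers : ∀ i : Fin (m + (n - m)), i ≠ Fin.natAdd m j' →
          Fin.append (β ∘ Fin.castSucc) (α ∘ g) i ∈ H.HL (Fin.append β (α ∘ g')) := by
        intro i
        induction i using Fin.addCases with
        | left p =>
          intro _
          rw [Fin.append_left]
          have h := H.mem_HL (Fin.append β (α ∘ g')) (Fin.castAdd (n - (m + 1)) (Fin.castSucc p))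
          rw [Fin.append_left] at h
          exact h
        | right q =>
          intro hne
          rw [Fin.append_right]
          have hqj : q ≠ j' := by
            intro h
            exact hne (by rw [h])
          have hcast : Fin.cast hk q ≠ Fin.cast hk j' :=
            fun h => hqj (Fin.cast_injective hk h)
          obtain ⟨q₀, hq₀⟩ := Fin.exists_succAbove_eq hcast
          have hgq : g' (Fin.cast hk2.symm q₀) = g q := by
            show g (Fin.cast hk.symm ((Fin.cast hk j').succAbove (Fin.cast hk2 (Fin.cast hk2.symm q₀)))) = g q
            congr 1
            have e1 : Fin.cast hk2 (Fin.cast hk2.symm q₀) = q₀ := by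
              apply Fin.ext; simp
            rw [e1, hq₀]
            apply Fin.ext; simp
          show α (g q) ∈ _
          rw [← hgq]
          have h := H.mem_HL (Fin.append β (α ∘ g')) (Fin.natAdd (m + 1) (Fin.cast hk2.symm q₀))
          rw [Fin.append_right] at h
          exact h
      have hexch : Fin.append (β ∘ Fin.castSucc) (α ∘ g) (Fin.natAdd m j') ∈
          H.HL (Fin.append β (α ∘ g')) := by
        refine H.exchange hsld hclosed (Fin.append (β ∘ Fin.castSucc) (α ∘ g)) c
          (Fin.natAdd m j') hj' hc hxW hothers
      have hall : ∀ i, Fin.append (β ∘ Fin.castSucc) (α ∘ g) i ∈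
          H.HL (Fin.append β (α ∘ g')) := by
        intro i
        by_cases hij : i = Fin.natAdd m j'
        · rw [hij]; exact hexch
        · exact hothers i hij
      apply Set.eq_univ_of_univ_subset
      rw [← hg]
      exact H.HL_subset hclosed hall
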